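/- For partitions λ and μ, the product h_{λ_1}[Ξ_μ]·h_{λ_2}[Ξ_μ]···h_{λ_ℓ}[Ξ_μ] equals the number of sequences (α^{(1)},...,α^{(ℓ(λ))}) of weak compositions where α^{(i)} is a weak composition of λ_i of length ℓ(μ) such that μ_j divides α^{(i)}_j for all i, j. -/

import Mathlib

open scoped BigOperators

/-- The list of `r`-th roots of unity for each part `r` of `μ` (eigenvalues of a
permutation matrix of cycle type `μ`), as a list. -/
noncomputable def xiL (μ : List ℕ) : List ℂ :=
  μ.flatMap fun r => (List.range r).map fun k =>
    Complex.exp (2 * Real.pi * Complex.I * k / r)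

/-- Evaluation of the complete homogeneous symmetric function `h_n` on a list of values. -/
noncomputable def hEvalL (n : ℕ) (L : List ℂ) : ℂ :=
  ∑ α ∈ Finset.univ.filter (fun α : Fin L.length → Fin (n + 1) => (∑ i, (α i).val) = n),
    ∏ i, L.get i ^ (α i).val

open Finset Polynomial

noncomputable def hN (n : ℕ) (L : List ℂ) : ℂ :=
  ∑ α ∈ Finset.Nat.antidiagonalTuple L.length n, ∏ i, L.get i ^ α i

lemma hN_nil (n : ℕ) : hN n [] = if n = 0 then 1 else 0 := by
  cases n with
  | zero => simp [hN]
  | succ n => simp [hN, Finset.Nat.antidiagonalTuple_zero_succ]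

lemma sum_antidiagonalTuple_succ {M : Type*} [AddCommMonoid M] (k n : ℕ)
    (f : (Fin (k+1) → ℕ) → M) :
    ∑ α ∈ Finset.Nat.antidiagonalTuple (k+1) n, f α
      = ∑ p ∈ Finset.HasAntidiagonal.antidiagonal n, ∑ β ∈ Finset.Nat.antidiagonalTuple k p.2,
          f (Fin.cons p.1 β) := by
  rw [Finset.sum_sigma']
  refine (Finset.sum_nbij' (i := fun α => (⟨(α 0, ∑ i, α (Fin.succ i)), Fin.tail α⟩ :
      (p : ℕ × ℕ) × (Fin k → ℕ)))
    (j := fun x => Fin.cons x.1.1 x.2) ?_ ?_ ?_ ?_ ?_)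
  · intro α hα
    rw [Finset.Nat.mem_antidiagonalTuple] at hα
    simp only [Finset.mem_sigma, Finset.HasAntidiagonal.mem_antidiagonal, Finset.Nat.mem_antidiagonalTuple]
    constructor
    · rw [← hα, Fin.sum_univ_succ]
    · rfl
  · intro x hx
    simp only [Finset.mem_sigma, Finset.HasAntidiagonal.mem_antidiagonal,
      Finset.Nat.mem_antidiagonalTuple] at hx
    rw [Finset.Nat.mem_antidiagonalTuple, Fin.sum_univ_succ]
    simp [Fin.cons_zero, Fin.cons_succ, hx.2, hx.1]
  · intro α _; simp [Fin.cons_self_tail]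
  · intro x hx
    simp only [Finset.mem_sigma, Finset.HasAntidiagonal.mem_antidiagonal,
      Finset.Nat.mem_antidiagonalTuple] at hx
    ext1
    · simp only [Fin.cons_zero]
      congr 1
      simp [Fin.cons_succ, hx.2]
    · simp [Fin.tail, Fin.cons_succ]
  · intro α _; simp [Fin.cons_self_tail]

lemma hN_cons (x : ℂ) (L : List ℂ) (n : ℕ) :
    hN n (x :: L) = ∑ p ∈ Finset.HasAntidiagonal.antidiagonal n, x ^ p.1 * hN p.2 L := by
  show (∑ α ∈ Finset.Nat.antidiagonalTuple (L.length + 1) n,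
      ∏ i : Fin (L.length + 1), (x :: L).get i ^ α i) = _
  rw [sum_antidiagonalTuple_succ]
  refine Finset.sum_congr rfl fun p hp => ?_
  rw [hN, Finset.mul_sum]
  refine Finset.sum_congr rfl fun β hβ => ?_
  rw [Fin.prod_univ_succ]
  simp [Fin.cons_zero, Fin.cons_succ]


noncomputable def HS (L : List ℂ) : PowerSeries ℂ := PowerSeries.mk fun n => hN n L

noncomputable def PP (L : List ℂ) : PowerSeries ℂ :=
  (L.map (fun x => 1 - PowerSeries.C (R := ℂ) x * PowerSeries.X)).prod


lemma HS_nil : HS [] = 1 := by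
  ext n
  simp [HS, hN_nil, PowerSeries.coeff_one]

lemma geom_inv (x : ℂ) :
    (1 - PowerSeries.C (R := ℂ) x * PowerSeries.X) * PowerSeries.mk (fun n => x ^ n) = 1 := by
  ext n
  cases n with
  | zero =>
    simp [PowerSeries.coeff_zero_eq_constantCoeff, map_mul, map_sub]
  | succ n =>
    rw [sub_mul, one_mul, map_sub, mul_assoc, PowerSeries.coeff_C_mul,
      PowerSeries.coeff_succ_X_mul, PowerSeries.coeff_mk, PowerSeries.coeff_mk,
      PowerSeries.coeff_one]
    simp [pow_succ, mul_comm]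

lemma HS_cons (x : ℂ) (L : List ℂ) :
    HS (x :: L) = PowerSeries.mk (fun n => x ^ n) * HS L := by
  ext n
  rw [PowerSeries.coeff_mul]
  simp [HS, hN_cons]

lemma one_sub_mul_HS_cons (x : ℂ) (L : List ℂ) :
    (1 - PowerSeries.C (R := ℂ) x * PowerSeries.X) * HS (x :: L) = HS L := by
  rw [HS_cons, ← mul_assoc, geom_inv, one_mul]

lemma PP_mul_HS (L : List ℂ) : PP L * HS L = 1 := by
  induction L with
  | nil => simp [PP, HS_nil]
  | cons x L ih =>
    have : PP (x :: L) = (1 - PowerSeries.C (R := ℂ) x * PowerSeries.X) * PP L := by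
      simp [PP, List.map_cons, List.prod_cons]
    rw [this]
    calc (1 - PowerSeries.C (R := ℂ) x * PowerSeries.X) * PP L * HS (x :: L)
        = PP L * ((1 - PowerSeries.C (R := ℂ) x * PowerSeries.X) * HS (x :: L)) := by ring
      _ = PP L * HS L := by rw [one_sub_mul_HS_cons]
      _ = 1 := ih

lemma PP_append (L1 L2 : List ℂ) : PP (L1 ++ L2) = PP L1 * PP L2 := by
  simp [PP, List.map_append, List.prod_append]

lemma HS_append (L1 L2 : List ℂ) : HS (L1 ++ L2) = HS L1 * HS L2 := by
  have h := PP_mul_HS (L1 ++ L2)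
  rw [PP_append] at h
  calc HS (L1 ++ L2) = (PP L1 * HS L1) * (PP L2 * HS L2) * HS (L1 ++ L2) := by
        rw [PP_mul_HS, PP_mul_HS]; ring
    _ = (HS L1 * HS L2) * (PP L1 * PP L2 * HS (L1 ++ L2)) := by ring
    _ = HS L1 * HS L2 := by rw [h, mul_one]

lemma hN_append (L1 L2 : List ℂ) (n : ℕ) :
    hN n (L1 ++ L2) = ∑ p ∈ Finset.HasAntidiagonal.antidiagonal n, hN p.1 L1 * hN p.2 L2 := by
  have := congrArg (PowerSeries.coeff (R := ℂ) n) (HS_append L1 L2)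
  rw [PowerSeries.coeff_mul] at this
  simpa [HS] using this

noncomputable def rootsL (r : ℕ) : List ℂ :=
  (List.range r).map fun k : ℕ => Complex.exp (2 * Real.pi * Complex.I * k / r)

-- the r-th roots as powers of the primitive root
lemma rootsL_eq (r : ℕ) :
    rootsL r = (List.range r).map fun k =>
      (Complex.exp (2 * Real.pi * Complex.I / r)) ^ k := by
  unfold rootsL
  refine List.map_congr_left fun k hk => ?_
  rw [← Complex.exp_nat_mul]
  congr 1
  push_cast
  ring

lemma prod_range_X_sub (r : ℕ) (hr : r ≠ 0) {ζ : ℂ} (hζ : IsPrimitiveRoot ζ r) :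
    ∏ k ∈ Finset.range r, (X - C (ζ ^ k)) = X ^ r - 1 := by
  have hmonic : (X ^ r - C (1 : ℂ)).Monic := monic_X_pow_sub_C (1 : ℂ) hr
  have hroots : (X ^ r - C (1:ℂ)).roots = (Multiset.range r).map fun k => ζ ^ k := by
    have := hζ.nthRoots_eq (α := 1) (a := (1:ℂ)) (one_pow r)
    rw [Polynomial.nthRoots] at this
    simpa using this
  have hcard : Multiset.card (X ^ r - C (1:ℂ)).roots = (X ^ r - C (1:ℂ)).natDegree := by
    rw [hroots, Multiset.card_map, Multiset.card_range, natDegree_X_pow_sub_C]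
  have := prod_multiset_X_sub_C_of_monic_of_roots_card_eq hmonic hcard
  rw [hroots, Multiset.map_map] at this
  rw [← C_1 (R := ℂ), ← this]
  simp [Finset.prod, Finset.range]

lemma prod_range_one_sub (r : ℕ) (hr : r ≠ 0) {ζ : ℂ} (hζ : IsPrimitiveRoot ζ r) :
    ∏ k ∈ Finset.range r, (1 - C (ζ ^ k) * X) = 1 - X ^ r := by
  apply Polynomial.funext
  intro t
  rw [eval_prod]
  simp only [eval_sub, eval_one, eval_mul, eval_C, eval_X, eval_pow]
  by_cases ht : t = 0
  · subst ht; simp [hr]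
  · have h1 := congrArg (eval t⁻¹) (prod_range_X_sub r hr hζ)
    rw [eval_prod] at h1
    simp only [eval_sub, eval_one, eval_C, eval_X, eval_pow] at h1
    have : ∏ k ∈ Finset.range r, (1 - ζ ^ k * t) =
        ∏ k ∈ Finset.range r, (t * (t⁻¹ - ζ ^ k)) := by
      refine Finset.prod_congr rfl fun k _ => ?_
      field_simp
    rw [this, Finset.prod_mul_distrib, Finset.prod_const, h1]
    rw [Finset.card_range, mul_sub, ← mul_pow, mul_inv_cancel₀ ht, one_pow, mul_one]






lemma list_flatMap_singleton {α β : Type*} (f : α → β) (l : List α) :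
    (l.flatMap fun a => [f a]) = l.map f := by
  induction l with
  | nil => simp
  | cons a l ih => simp [List.flatMap_cons, ih]

lemma xiL_cons (r : ℕ) (μ : List ℕ) : xiL (r :: μ) = rootsL r ++ xiL μ := by
  simp [xiL, rootsL, List.flatMap_cons, list_flatMap_singleton, List.map_map]

lemma PP_roots (r : ℕ) (hr : r ≠ 0) :
    PP (rootsL r) = 1 - PowerSeries.X ^ r := by
  set ζ := Complex.exp (2 * Real.pi * Complex.I / r) with hζdef
  have hζ : IsPrimitiveRoot ζ r := Complex.isPrimitiveRoot_exp r hr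
  have h1 : PP (rootsL r)
      = ∏ k ∈ Finset.range r, (1 - PowerSeries.C (R := ℂ) (ζ ^ k) * PowerSeries.X) := by
    rw [PP, rootsL_eq, List.map_map]
    simp [Finset.prod, Finset.range, Function.comp_def, Multiset.range, Multiset.map_coe,
      Multiset.prod_coe, List.map_map]
    rfl
  rw [h1]
  have h2 := congrArg (Polynomial.coeToPowerSeries.ringHom (R := ℂ))
    (prod_range_one_sub r hr hζ)
  rw [map_prod, map_sub, map_pow, map_one] at h2
  simpa [Polynomial.coeToPowerSeries.ringHom_apply, Polynomial.coe_sub, Polynomial.coe_one,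
    Polynomial.coe_mul, Polynomial.coe_C, Polynomial.coe_X] using h2


lemma one_sub_X_pow_mul_G (r : ℕ) (hr : r ≠ 0) :
    (1 - PowerSeries.X ^ r) * PowerSeries.mk (fun n => if r ∣ n then (1:ℂ) else 0) = 1 := by
  ext n
  rw [sub_mul, one_mul, map_sub, PowerSeries.coeff_mk]
  by_cases h : r ≤ n
  · have hn : n = (n - r) + r := (Nat.sub_add_cancel h).symm
    rw [hn, PowerSeries.coeff_X_pow_mul, PowerSeries.coeff_mk, ← hn]
    have hdvd : (r ∣ n) ↔ (r ∣ n - r) := by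
      constructor
      · intro hd; exact (Nat.dvd_sub hd dvd_rfl)
      · intro hd; have := Nat.dvd_add hd (dvd_refl r); rwa [← hn] at this
    have hn0 : n ≠ 0 := by
      intro h0; subst h0; exact hr (Nat.le_zero.mp h)
    rw [if_congr hdvd rfl rfl, sub_self, PowerSeries.coeff_one, if_neg hn0]
  · have hx : (PowerSeries.coeff (R := ℂ) n) (PowerSeries.X ^ r *
        PowerSeries.mk (fun n => if r ∣ n then (1:ℂ) else 0)) = 0 := by
      rw [PowerSeries.coeff_mul]
      refine Finset.sum_eq_zero fun p hp => ?_
      rw [Finset.HasAntidiagonal.mem_antidiagonal] at hp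
      rw [PowerSeries.coeff_X_pow, if_neg, zero_mul]
      intro he
      exact h (he ▸ hp ▸ Nat.le_add_right _ _)
    rw [hx, sub_zero, PowerSeries.coeff_one]
    by_cases hn0 : n = 0
    · subst hn0; simp
    · rw [if_neg hn0, if_neg]
      intro hd
      exact hn0 (Nat.eq_zero_of_dvd_of_lt hd (lt_of_not_ge h))
lemma hN_rootsL (r : ℕ) (hr : r ≠ 0) (n : ℕ) :
    hN n (rootsL r) = if r ∣ n then 1 else 0 := by
  have h1 := PP_mul_HS (rootsL r)
  rw [PP_roots r hr] at h1
  have h2 := one_sub_X_pow_mul_G r hr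
  set G := PowerSeries.mk (fun n => if r ∣ n then (1:ℂ) else 0)
  have : HS (rootsL r) = G := by
    calc HS (rootsL r) = HS (rootsL r) * ((1 - PowerSeries.X ^ r) * G) := by rw [h2, mul_one]
      _ = G * ((1 - PowerSeries.X ^ r) * HS (rootsL r)) := by ring
      _ = G := by rw [h1, mul_one]
  have := congrArg (PowerSeries.coeff (R := ℂ) n) this
  simpa [HS, G] using this



def cnt (μ : List ℕ) (n : ℕ) : ℕ :=
  ((Finset.Nat.antidiagonalTuple μ.length n).filter
    fun β => ∀ j : Fin μ.length, μ.get j ∣ β j).card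

lemma cnt_nil (n : ℕ) : cnt [] n = if n = 0 then 1 else 0 := by
  cases n with
  | zero => simp [cnt]
  | succ n => simp [cnt, Finset.Nat.antidiagonalTuple_zero_succ]

lemma cnt_cons (r : ℕ) (μ : List ℕ) (n : ℕ) :
    cnt (r :: μ) n = ∑ p ∈ Finset.HasAntidiagonal.antidiagonal n, if r ∣ p.1 then cnt μ p.2 else 0 := by
  rw [cnt, Finset.card_filter]
  show (∑ α ∈ Finset.Nat.antidiagonalTuple (μ.length + 1) n,
      if (∀ j : Fin (μ.length + 1), (r :: μ).get j ∣ α j) then 1 else 0) = _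
  rw [sum_antidiagonalTuple_succ]
  refine Finset.sum_congr rfl fun p hp => ?_
  have hsplit : ∀ β : Fin μ.length → ℕ,
      (∀ j : Fin (μ.length + 1), (r :: μ).get j ∣ (Fin.cons p.1 β : Fin (μ.length+1) → ℕ) j)
        ↔ (r ∣ p.1 ∧ ∀ j : Fin μ.length, μ.get j ∣ β j) := by
    intro β
    rw [Fin.forall_fin_succ]
    simp [Fin.cons_zero, Fin.cons_succ]
  by_cases hA : r ∣ p.1
  · rw [if_pos hA, cnt, Finset.card_filter]
    refine Finset.sum_congr rfl fun β hβ => ?_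
    rw [if_congr (hsplit β) rfl rfl]
    simp [hA]
  · rw [if_neg hA]
    refine Finset.sum_eq_zero fun β hβ => ?_
    rw [if_congr (hsplit β) rfl rfl, if_neg]
    tauto

lemma hN_xiL (μ : List ℕ) (hmpos : ∀ i ∈ μ, 0 < i) (n : ℕ) :
    hN n (xiL μ) = (cnt μ n : ℂ) := by
  induction μ generalizing n with
  | nil =>
    rw [show xiL [] = [] from rfl, hN_nil, cnt_nil]
    split <;> simp
  | cons r μ ih =>
    have hr : r ≠ 0 := (hmpos r (List.mem_cons_self)).ne'
    have hmpos' : ∀ i ∈ μ, 0 < i := fun i hi => hmpos i (List.mem_cons_of_mem _ hi)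
    rw [xiL_cons, hN_append, cnt_cons]
    push_cast
    refine Finset.sum_congr rfl fun p hp => ?_
    rw [hN_rootsL r hr, ih hmpos']
    by_cases hd : r ∣ p.1 <;> simp [hd]

lemma hEvalL_eq_hN (n : ℕ) (L : List ℂ) : hEvalL n L = hN n L := by
  unfold hEvalL hN
  refine Finset.sum_nbij' (i := fun α j => ((α j : Fin (n+1)) : ℕ))
    (j := fun β j => (⟨β j % (n+1), Nat.mod_lt _ (Nat.succ_pos n)⟩ : Fin (n+1)))
    ?_ ?_ ?_ ?_ ?_
  · intro α hα
    rw [Finset.mem_filter] at hα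
    rw [Finset.Nat.mem_antidiagonalTuple]
    exact hα.2
  · intro β hβ
    rw [Finset.Nat.mem_antidiagonalTuple] at hβ
    have hle : ∀ j, β j ≤ n := fun j => hβ ▸ Finset.single_le_sum
      (f := β) (fun i _ => Nat.zero_le _) (Finset.mem_univ j)
    rw [Finset.mem_filter]
    refine ⟨Finset.mem_univ _, ?_⟩
    calc (∑ j, (β j % (n+1))) = ∑ j, β j := by
          refine Finset.sum_congr rfl fun j _ => Nat.mod_eq_of_lt (Nat.lt_succ_of_le (hle j))
      _ = n := hβ
  · intro α _
    funext j
    exact Fin.ext (Nat.mod_eq_of_lt (α j).isLt)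
  · intro β hβ
    rw [Finset.Nat.mem_antidiagonalTuple] at hβ
    have hle : ∀ j, β j ≤ n := fun j => hβ ▸ Finset.single_le_sum
      (f := β) (fun i _ => Nat.zero_le _) (Finset.mem_univ j)
    funext j
    exact Nat.mod_eq_of_lt (Nat.lt_succ_of_le (hle j))
  · intro α _; rfl

lemma card_fin_eq_cnt (μ : List ℕ) (n : ℕ) :
    (Finset.univ.filter fun B : Fin μ.length → Fin (n+1) =>
      (∑ j, (B j).val) = n ∧ ∀ j, μ.get j ∣ (B j).val).card = cnt μ n := by
  rw [cnt]
  refine Finset.card_nbij' (i := fun B j => ((B j : Fin (n+1)) : ℕ))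
    (j := fun β j => (⟨β j % (n+1), Nat.mod_lt _ (Nat.succ_pos n)⟩ : Fin (n+1)))
    ?_ ?_ ?_ ?_
  · intro B hB
    rw [Finset.mem_coe, Finset.mem_filter] at hB
    rw [Finset.mem_coe, Finset.mem_filter, Finset.Nat.mem_antidiagonalTuple]
    exact ⟨hB.2.1, hB.2.2⟩
  · intro β hβ
    rw [Finset.mem_coe, Finset.mem_filter, Finset.Nat.mem_antidiagonalTuple] at hβ
    have hle : ∀ j, β j ≤ n := fun j => hβ.1 ▸ Finset.single_le_sum
      (f := β) (fun i _ => Nat.zero_le _) (Finset.mem_univ j)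
    have hmod : ∀ j, β j % (n+1) = β j :=
      fun j => Nat.mod_eq_of_lt (Nat.lt_succ_of_le (hle j))
    rw [Finset.mem_coe, Finset.mem_filter]
    refine ⟨Finset.mem_univ _, ?_, ?_⟩
    · calc (∑ j, (β j % (n+1))) = ∑ j, β j := Finset.sum_congr rfl fun j _ => hmod j
        _ = n := hβ.1
    · intro j
      simpa [hmod j] using hβ.2 j
  · intro B _
    funext j
    exact Fin.ext (Nat.mod_eq_of_lt (B j).isLt)
  · intro β hβ
    rw [Finset.mem_coe, Finset.mem_filter, Finset.Nat.mem_antidiagonalTuple] at hβ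
    have hle : ∀ j, β j ≤ n := fun j => hβ.1 ▸ Finset.single_le_sum
      (f := β) (fun i _ => Nat.zero_le _) (Finset.mem_univ j)
    funext j
    exact Nat.mod_eq_of_lt (Nat.lt_succ_of_le (hle j))

theorem hEval_prod_at_cycle_type (lam μ : List ℕ)
    (hlpos : ∀ i ∈ lam, 0 < i) (hlsort : lam.Pairwise (· ≥ ·))
    (hmpos : ∀ i ∈ μ, 0 < i) (hmsort : μ.Pairwise (· ≥ ·)) :
    (∏ i : Fin lam.length, hEvalL (lam.get i) (xiL μ)) =
      ((Finset.univ.filter fun A : (i : Fin lam.length) → Fin μ.length → Fin (lam.get i + 1) =>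
        ∀ i, (∑ j, (A i j).val) = lam.get i ∧ ∀ j, μ.get j ∣ (A i j).val).card : ℂ) := by
  classical
  have hL : (∏ i : Fin lam.length, hEvalL (lam.get i) (xiL μ))
      = ((∏ i : Fin lam.length, cnt μ (lam.get i) : ℕ) : ℂ) := by
    push_cast
    refine Finset.prod_congr rfl fun i _ => ?_
    rw [hEvalL_eq_hN, hN_xiL μ hmpos]
  rw [hL]
  congr 1
  have hR : (Finset.univ.filter fun A : (i : Fin lam.length) → Fin μ.length → Fin (lam.get i + 1) =>
        ∀ i, (∑ j, (A i j).val) = lam.get i ∧ ∀ j, μ.get j ∣ (A i j).val).card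
      = ∏ i : Fin lam.length, (Finset.univ.filter fun B : Fin μ.length → Fin (lam.get i + 1) =>
          (∑ j, (B j).val) = lam.get i ∧ ∀ j, μ.get j ∣ (B j).val).card := by
    rw [← Fintype.card_subtype]
    rw [Fintype.card_congr (Equiv.subtypePiEquivPi (p := fun i (B : Fin μ.length → Fin (lam.get i + 1)) =>
      (∑ j, (B j).val) = lam.get i ∧ ∀ j, μ.get j ∣ (B j).val))]
    rw [Fintype.card_pi]
    refine Finset.prod_congr rfl fun i _ => ?_
    rw [Fintype.card_subtype]
  rw [hR]
  exact Finset.prod_congr rfl fun i _ => (card_fin_eq_cnt μ (lam.get i)).symm
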